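/- Let m ≥ 1, let s ∈ ({0,1})^ℤ and let a ∈ ℤ be such that s(a) = s(a+1) = ⋯ = s(a+m) = 0. Then for every integer k ≥ m: Σ_{i=a}^{a+k} s(i) = Σ_{i=a+m}^{a+k} (F_m s)(i) + ε, where ε = 1 if s(a+k+1) = 0 and s(i) = 1 for some i ∈ {a+k−m+1, …, a+k}, and ε = 0 otherwise. (In one time step no car enters the segment from the left, and at most one car — present among the last m sites and not blocked on the right — leaves it on the right.) -/

import Mathlib

open scoped Classical

/-- The Fukui–Ishibashi cellular automaton with maximum speed `m` on `{0,1}^ℤ`. -/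
noncomputable def fukuiIshibashi (m : ℕ) (s : ℤ → Bool) : ℤ → Bool := fun i =>
  if (s i = true ∧ s (i + 1) = true) ∨
     (s i = false ∧ ∃ j : ℕ, 1 ≤ j ∧ j ≤ m ∧ s (i - (j : ℤ)) = true ∧
        (∀ k : ℕ, 1 ≤ k → k < j → s (i - (k : ℤ)) = false) ∧
        (j = m ∨ s (i + 1) = true))
  then true else false

lemma fi_iff (m : ℕ) (s : ℤ → Bool) (i : ℤ) :
    fukuiIshibashi m s i = true ↔
      (s i = true ∧ s (i + 1) = true) ∨
      (s i = false ∧ ∃ j : ℕ, 1 ≤ j ∧ j ≤ m ∧ s (i - (j : ℤ)) = true ∧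
        (∀ k : ℕ, 1 ≤ k → k < j → s (i - (k : ℤ)) = false) ∧
        (j = m ∨ s (i + 1) = true)) := by
  unfold fukuiIshibashi
  split <;> rename_i h <;> simp only [h, iff_true, iff_false] <;> simp [h]

lemma key (m : ℕ) (hm : 1 ≤ m) (s : ℤ → Bool) (a : ℤ) (k : ℕ) (hk : m ≤ k) :
    (if fukuiIshibashi m s (a + ((k + 1 : ℕ) : ℤ)) = true then (1 : ℤ) else 0)
      + (if s (a + ((k + 1 : ℕ) : ℤ) + 1) = false ∧
            ∃ i ∈ Finset.Icc (k + 1 - m + 1) (k + 1), s (a + (i : ℤ)) = true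
         then (1 : ℤ) else 0)
    = (if s (a + ((k + 1 : ℕ) : ℤ)) = true then (1 : ℤ) else 0)
      + (if s (a + (k : ℤ) + 1) = false ∧
            ∃ i ∈ Finset.Icc (k - m + 1) k, s (a + (i : ℤ)) = true
         then (1 : ℤ) else 0) := by
  have hx : (((k + 1 : ℕ) : ℤ)) = (k : ℤ) + 1 := by push_cast; ring
  rw [hx]
  set x : ℤ := a + ((k : ℤ) + 1) with hxdef
  have hx1 : a + (k : ℤ) + 1 = x := by rw [hxdef]; ring
  rw [hx1]
  have hpos : ∀ i : ℕ, i ≤ k + 1 → x - ((k + 1 - i : ℕ) : ℤ) = a + (i : ℤ) := by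
    intro i hi
    have : ((k + 1 - i : ℕ) : ℤ) = (k : ℤ) + 1 - i := by omega
    rw [this, hxdef]; ring
  by_cases hb : s x = true
  · -- car at position k+1
    have h4 : ¬(s x = false ∧ ∃ i ∈ Finset.Icc (k - m + 1) k, s (a + (i : ℤ)) = true) := by
      rintro ⟨h, -⟩; rw [hb] at h; simp at h  -- maybe fix
    rw [if_pos hb, if_neg h4]
    by_cases hc : s (x + 1) = true
    · -- blocked: car stays
      have hF : fukuiIshibashi m s x = true := (fi_iff m s x).2 (Or.inl ⟨hb, hc⟩)
      have h2 : ¬(s (x + 1) = false ∧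
          ∃ i ∈ Finset.Icc (k + 1 - m + 1) (k + 1), s (a + (i : ℤ)) = true) := by
        rintro ⟨h, -⟩; rw [hc] at h; simp at h
      rw [if_pos hF, if_neg h2]
    · -- car at k+1 leaves: F x = false, new epsilon = 1
      have hcf : s (x + 1) = false := by simpa using hc
      have hF : ¬ fukuiIshibashi m s x = true := by
        intro h
        rw [fi_iff] at h
        rcases h with ⟨-, h⟩ | ⟨h, -⟩
        · exact hc h
        · rw [hb] at h; simp at h
      have h2 : s (x + 1) = false ∧
          ∃ i ∈ Finset.Icc (k + 1 - m + 1) (k + 1), s (a + (i : ℤ)) = true := by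
        refine ⟨hcf, k + 1, Finset.mem_Icc.2 ⟨by omega, le_refl _⟩, ?_⟩
        rw [show a + ((k + 1 : ℕ) : ℤ) = x by rw [hx, hxdef]]
        exact hb
      rw [if_neg hF, if_pos h2]; norm_num
  · -- no car at position k+1
    have hbf : s x = false := by simpa using hb
    rw [if_neg hb]
    by_cases hA : ∃ i ∈ Finset.Icc (k - m + 1) k, s (a + (i : ℤ)) = true
    · -- old epsilon = 1
      rw [if_pos (show s x = false ∧ _ from ⟨hbf, hA⟩)]
      obtain ⟨i0, hi0m, hi0⟩ := hA
      rw [Finset.mem_Icc] at hi0m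
      have hPex : ∃ j : ℕ, 1 ≤ j ∧ s (x - (j : ℤ)) = true := by
        refine ⟨k + 1 - i0, by omega, ?_⟩
        rw [hpos i0 (by omega)]; exact hi0
      set j := Nat.find hPex with hjdef
      obtain ⟨hj1, hjcar⟩ := Nat.find_spec hPex
      have hjle : j ≤ m := by
        have : j ≤ k + 1 - i0 := Nat.find_min' hPex
          ⟨by omega, by rw [hpos i0 (by omega)]; exact hi0⟩
        omega
      have hjmin : ∀ k' : ℕ, 1 ≤ k' → k' < j → s (x - (k' : ℤ)) = false := by
        intro k' h1 h2
        have h3 := Nat.find_min hPex h2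
        simp only [not_and] at h3
        simpa using h3 h1
      by_cases hc : s (x + 1) = true
      · -- next site occupied: car advances next to it; F x = true, eps' = 0
        have hF : fukuiIshibashi m s x = true :=
          (fi_iff m s x).2 (Or.inr ⟨hbf, j, hj1, hjle, hjcar, hjmin, Or.inr hc⟩)
        have h2 : ¬(s (x + 1) = false ∧
            ∃ i ∈ Finset.Icc (k + 1 - m + 1) (k + 1), s (a + (i : ℤ)) = true) := by
          rintro ⟨h, -⟩; rw [hc] at h; simp at h
        rw [if_pos hF, if_neg h2]; norm_num
      · have hcf : s (x + 1) = false := by simpa using hc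
        by_cases hA' : ∃ i ∈ Finset.Icc (k + 1 - m + 1) (k + 1), s (a + (i : ℤ)) = true
        · -- a car within distance < m: it does not exit; F x = false
          obtain ⟨i1, hi1m, hi1⟩ := hA'
          rw [Finset.mem_Icc] at hi1m
          have hi1k : i1 ≤ k := by
            rcases Nat.lt_or_ge i1 (k + 1) with h | h
            · omega
            · exfalso
              have he : i1 = k + 1 := by omega
              rw [he] at hi1
              rw [show a + ((k + 1 : ℕ) : ℤ) = x by rw [hx, hxdef]] at hi1
              rw [hbf] at hi1
              simp at hi1
          have hjlt : j < m := by
            have : j ≤ k + 1 - i1 := Nat.find_min' hPex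
              ⟨by omega, by rw [hpos i1 (by omega)]; exact hi1⟩
            omega
          have hF : ¬ fukuiIshibashi m s x = true := by
            intro h
            rw [fi_iff] at h
            rcases h with ⟨h, -⟩ | ⟨-, j', hj'1, hj'm, hj'car, hj'min, hj'r⟩
            · rw [hbf] at h; simp at h
            · have hj'eq : j' = m := by
                rcases hj'r with h | h
                · exact h
                · rw [hcf] at h; simp at h
              have h5 : s (x - (j : ℤ)) = false := hj'min j hj1 (by omega)
              rw [hjcar] at h5; simp at h5
          have h2 : s (x + 1) = false ∧
              ∃ i ∈ Finset.Icc (k + 1 - m + 1) (k + 1), s (a + (i : ℤ)) = true :=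
            ⟨hcf, i1, Finset.mem_Icc.2 ⟨hi1m.1, hi1m.2⟩, hi1⟩
          rw [if_neg hF, if_pos h2]
        · -- nearest car at distance exactly m: it exits; F x = true, eps' = 0
          have hjm : j = m := by
            by_contra hne
            have hjlt : j < m := by omega
            apply hA'
            refine ⟨k + 1 - j, Finset.mem_Icc.2 ⟨by omega, by omega⟩, ?_⟩
            rw [← hpos (k + 1 - j) (by omega)]
            rw [show k + 1 - (k + 1 - j) = j by omega]
            exact hjcar
          have hF : fukuiIshibashi m s x = true :=
            (fi_iff m s x).2 (Or.inr ⟨hbf, j, hj1, hjle, hjcar, hjmin, Or.inl hjm⟩)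
          have h2 : ¬(s (x + 1) = false ∧
              ∃ i ∈ Finset.Icc (k + 1 - m + 1) (k + 1), s (a + (i : ℤ)) = true) :=
            fun h => hA' h.2
          rw [if_pos hF, if_neg h2]; norm_num
    · -- no car in window: nothing happens
      have h4 : ¬(s x = false ∧ ∃ i ∈ Finset.Icc (k - m + 1) k, s (a + (i : ℤ)) = true) :=
        fun h => hA h.2
      rw [if_neg h4]
      have hnone : ∀ i : ℕ, k - m + 1 ≤ i → i ≤ k + 1 → s (a + (i : ℤ)) = false := by
        intro i h1 h2
        rcases Nat.lt_or_ge i (k + 1) with h | h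
        · by_contra hcon
          exact hA ⟨i, Finset.mem_Icc.2 ⟨h1, by omega⟩, by simpa using hcon⟩
        · rw [show i = k + 1 by omega]
          rw [show a + ((k + 1 : ℕ) : ℤ) = x by rw [hx, hxdef]]
          exact hbf
      have hF : ¬ fukuiIshibashi m s x = true := by
        intro h
        rw [fi_iff] at h
        rcases h with ⟨h, -⟩ | ⟨-, j', hj'1, hj'm, hj'car, -, -⟩
        · rw [hbf] at h; simp at h
        · have h6 := hnone (k + 1 - j') (by omega) (by omega)
          rw [← hpos (k + 1 - j') (by omega)] at h6
          rw [show k + 1 - (k + 1 - j') = j' by omega] at h6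
          rw [hj'car] at h6
          simp at h6
      have h2 : ¬(s (x + 1) = false ∧
          ∃ i ∈ Finset.Icc (k + 1 - m + 1) (k + 1), s (a + (i : ℤ)) = true) := by
        rintro ⟨-, i, him, hi⟩
        rw [Finset.mem_Icc] at him
        rw [hnone i (by omega) (by omega)] at hi
        simp at hi
      rw [if_neg hF, if_neg h2]

/-- If sites `a, …, a+m` are empty, then for every `k ≥ m` the number of cars in
`{a, …, a+k}` equals the number of cars in `{a+m, …, a+k}` one step later, plus
`ε = 1` exactly when a car occupies one of the last `m` sites and site `a+k+1`
is empty (so one car leaves on the right), and `ε = 0` otherwise. -/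
theorem car_count_step (m : ℕ) (hm : 1 ≤ m) (s : ℤ → Bool) (a : ℤ)
    (h0 : ∀ r : ℕ, r ≤ m → s (a + (r : ℤ)) = false)
    (k : ℕ) (hk : m ≤ k) :
    (∑ i ∈ Finset.range (k + 1), (if s (a + (i : ℤ)) = true then 1 else 0 : ℤ))
      = (∑ i ∈ Finset.Icc m k,
          (if fukuiIshibashi m s (a + (i : ℤ)) = true then 1 else 0 : ℤ))
        + (if s (a + (k : ℤ) + 1) = false ∧
              ∃ i ∈ Finset.Icc (k - m + 1) k, s (a + (i : ℤ)) = true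
           then 1 else 0) := by
  induction k, hk using Nat.le_induction with
  | base =>
    have hL : (∑ i ∈ Finset.range (m + 1),
        (if s (a + (i : ℤ)) = true then 1 else 0 : ℤ)) = 0 := by
      refine Finset.sum_eq_zero fun i hi => ?_
      rw [Finset.mem_range] at hi
      rw [h0 i (by omega)]
      simp
    have hF : ¬ fukuiIshibashi m s (a + (m : ℤ)) = true := by
      intro h
      rw [fi_iff] at h
      rcases h with ⟨h, -⟩ | ⟨-, j, hj1, hjm, hjcar, -, -⟩
      · rw [h0 m le_rfl] at h; simp at h
      · have he : a + (m : ℤ) - (j : ℤ) = a + ((m - j : ℕ) : ℤ) := by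
          have : ((m - j : ℕ) : ℤ) = (m : ℤ) - j := by omega
          rw [this]; ring
        rw [he, h0 (m - j) (by omega)] at hjcar
        simp at hjcar
    have hε : ¬(s (a + (m : ℤ) + 1) = false ∧
        ∃ i ∈ Finset.Icc (m - m + 1) m, s (a + (i : ℤ)) = true) := by
      rintro ⟨-, i, him, hi⟩
      rw [Finset.mem_Icc] at him
      rw [h0 i (by omega)] at hi
      simp at hi
    rw [hL, Finset.Icc_self, Finset.sum_singleton, if_neg hF, if_neg hε]; norm_num
  | succ k hk ih =>
    rw [Finset.sum_range_succ, ih, Finset.sum_Icc_succ_top (show m ≤ k + 1 by omega)]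
    have hkey := key m hm s a k hk
    linarith
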